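/- The following q-series identity holds as formal power series: the product over n ≥ 1 with n not congruent to 0, ±12 mod 27 of 1/(1-q^n), minus q times the product over n ≥ 1 with n not congruent to 0, ±6 mod 27 of 1/(1-q^n), minus q^2 times the product over n ≥ 1 with n not congruent to 0, ±3 mod 27 of 1/(1-q^n), equals 1. -/

import Mathlib

open PowerSeries

/-- The infinite product `∏_{n ≥ 1} f n` of power series, where the `n`-th factor
is `1 + O(q^n)`: its `N`-th coefficient is the `N`-th coefficient of any
sufficiently long partial product. -/
noncomputable def seriesProd (f : ℕ → PowerSeries ℤ) : PowerSeries ℤ :=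
  PowerSeries.mk fun N => coeff (R := ℤ) N (∏ n ∈ Finset.range (N + 1), f n)

/-- `∏_{n ≥ 1, n ≢ 0, ±a (mod 27)} 1/(1 - q^n)` as a formal power series in `ℤ⟦q⟧`. -/
noncomputable def AG (a : ℕ) : PowerSeries ℤ :=
  seriesProd fun n =>
    if (n + 1) % 27 = 0 ∨ (n + 1) % 27 = a % 27 ∨ (n + 1 + a) % 27 = 0 then 1
    else PowerSeries.invOfUnit (1 - X ^ (n + 1)) 1

section Aux

variable {R : Type*} [CommRing R]


/-- Gaussian binomial coefficient `[n choose k]_x` as an element of `R`. -/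
def gb (x : R) : ℕ → ℕ → R
  | _, 0 => 1
  | 0, _ + 1 => 0
  | n + 1, k + 1 => gb x n k + x ^ (k + 1) * gb x n (k + 1)

@[simp] lemma gb_zero_right (x : R) (n : ℕ) : gb x n 0 = 1 := by cases n <;> rfl

lemma gb_succ_succ (x : R) (n k : ℕ) :
    gb x (n + 1) (k + 1) = gb x n k + x ^ (k + 1) * gb x n (k + 1) := rfl

lemma gb_eq_zero (x : R) : ∀ {n k : ℕ}, n < k → gb x n k = 0
  | 0, _ + 1, _ => rfl
  | n + 1, k + 1, h => by
    rw [gb_succ_succ, gb_eq_zero x (by omega), gb_eq_zero x (by omega), mul_zero, add_zero]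

lemma gb_diag (x : R) : ∀ n : ℕ, gb x n n = 1
  | 0 => rfl
  | n + 1 => by
    rw [gb_succ_succ, gb_diag x n, gb_eq_zero x (by omega), mul_zero, add_zero]

lemma gb_pascal2 (x : R) : ∀ n k : ℕ, gb x (n + 1) (k + 1) = x ^ (n - k) * gb x n k + gb x n (k + 1)
  | 0, 0 => by simp [gb_succ_succ, gb_eq_zero]
  | 0, k + 1 => by simp [gb_succ_succ, gb_eq_zero]
  | n + 1, 0 => by
    conv_lhs => rw [gb_succ_succ, gb_pascal2 x n 0]
    conv_rhs => rw [gb_succ_succ]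
    simp only [gb_zero_right, Nat.sub_zero]
    ring
  | n + 1, k + 1 => by
    rcases le_or_gt (k + 1) n with h | h
    · conv_lhs => rw [gb_succ_succ, gb_pascal2 x n k, gb_pascal2 x n (k + 1)]
      conv_rhs => rw [gb_succ_succ, gb_succ_succ]
      have e : n - k = n - (k + 1) + 1 := by omega
      have e2 : n + 1 - (k + 1) = n - (k + 1) + 1 := by omega
      rw [e, e2]; ring
    · rcases Nat.lt_or_ge (n + 1) k with h2 | h2
      · rw [gb_eq_zero x (by omega), gb_eq_zero x (by omega), gb_eq_zero x (by omega)]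
        ring
      · rcases Nat.eq_or_lt_of_le h2 with h3 | h3
        · subst h3
          rw [gb_eq_zero x (by omega), gb_eq_zero x (by omega), gb_eq_zero x (by omega)]
          ring
        · have : k = n := by omega
          subst this
          rw [gb_diag, gb_diag, gb_eq_zero x (by omega)]
          simp

lemma gb_prod_left (x : R) : ∀ m j : ℕ, j ≤ m →
    gb x m j * ∏ i ∈ Finset.range j, (1 - x ^ (i + 1)) =
      ∏ i ∈ Finset.range j, (1 - x ^ (m - j + i + 1))
  | m, 0, _ => by simp
  | 0, j + 1, h => by omega
  | m + 1, j + 1, h => by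
    rcases Nat.eq_or_lt_of_le h with h1 | h1
    · have hj : j = m := by omega
      subst hj
      rw [gb_diag, one_mul]
      exact Finset.prod_congr rfl fun i _ => by norm_num
    · have hj : j + 1 ≤ m := by omega
      have IH1 := gb_prod_left x m j (by omega)
      have IH2 := gb_prod_left x m (j + 1) hj
      rw [gb_pascal2, Finset.prod_range_succ, add_mul]
      have e1 : ∀ i : ℕ, m - (j + 1) + (i + 1) + 1 = m - j + i + 1 := fun i => by omega
      have e2 : m - (j + 1) + 0 + 1 = m - j := by omega
      have E2 : (∏ i ∈ Finset.range (j + 1), (1 - x ^ (m - (j + 1) + i + 1)))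
          = (1 - x ^ (m - j)) * ∏ i ∈ Finset.range j, (1 - x ^ (m - j + i + 1)) := by
        rw [Finset.prod_range_succ']
        rw [e2, mul_comm]
        congr 1
        exact Finset.prod_congr rfl fun i _ => by rw [e1]
      have E3 : (∏ i ∈ Finset.range (j + 1), (1 - x ^ (m + 1 - (j + 1) + i + 1)))
          = (∏ i ∈ Finset.range j, (1 - x ^ (m - j + i + 1))) * (1 - x ^ (m + 1)) := by
        rw [Finset.prod_range_succ]
        have : m + 1 - (j + 1) + j + 1 = m + 1 := by omega
        rw [this]
        exact congrArg (· * _) (Finset.prod_congr rfl fun i _ => by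
          have : m + 1 - (j + 1) + i + 1 = m - j + i + 1 := by omega
          rw [this])
      calc x ^ (m - j) * gb x m j * ((∏ i ∈ Finset.range j, (1 - x ^ (i + 1))) * (1 - x ^ (j + 1)))
            + gb x m (j + 1) * ((∏ i ∈ Finset.range j, (1 - x ^ (i + 1))) * (1 - x ^ (j + 1)))
          = x ^ (m - j) * (1 - x ^ (j + 1)) *
              (gb x m j * ∏ i ∈ Finset.range j, (1 - x ^ (i + 1)))
            + gb x m (j + 1) * ∏ i ∈ Finset.range (j + 1), (1 - x ^ (i + 1)) := by
            rw [Finset.prod_range_succ]; ring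
        _ = x ^ (m - j) * (1 - x ^ (j + 1)) * ∏ i ∈ Finset.range j, (1 - x ^ (m - j + i + 1))
            + (1 - x ^ (m - j)) * ∏ i ∈ Finset.range j, (1 - x ^ (m - j + i + 1)) := by
            rw [IH1, IH2, E2]
        _ = ∏ i ∈ Finset.range (j + 1), (1 - x ^ (m + 1 - (j + 1) + i + 1)) := by
            rw [E3]
            have e4 : m + 1 = (m - j) + (j + 1) := by omega
            rw [e4, pow_add]
            ring

lemma gb_prod_right (x : R) : ∀ m j : ℕ, j ≤ m →
    gb x m j * ∏ i ∈ Finset.range (m - j), (1 - x ^ (i + 1)) =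
      ∏ i ∈ Finset.range (m - j), (1 - x ^ (j + i + 1))
  | m, 0, _ => by simp
  | 0, j + 1, h => by omega
  | m + 1, j + 1, h => by
    rcases Nat.eq_or_lt_of_le h with h1 | h1
    · have hj : j = m := by omega
      subst hj
      simp [gb_diag]
    · have hj : j + 1 ≤ m := by omega
      have IH1 := gb_prod_right x m j (by omega)
      have IH2 := gb_prod_right x m (j + 1) hj
      have em : m + 1 - (j + 1) = (m - (j + 1)) + 1 := by omega
      rw [gb_succ_succ, em, add_mul]
      have emj : m - (j + 1) + 1 = m - j := by omega
      -- IH1 has range (m - j) = range (m - (j+1) + 1)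
      rw [← emj] at IH1
      have E1 : (∏ i ∈ Finset.range (m - (j + 1) + 1), (1 - x ^ (j + i + 1)))
          = (1 - x ^ (j + 1)) * ∏ i ∈ Finset.range (m - (j + 1)), (1 - x ^ (j + 1 + i + 1)) := by
        rw [Finset.prod_range_succ']
        rw [mul_comm]
        congr 1
        all_goals first
          | (exact Finset.prod_congr rfl fun i _ => by
              have : j + (i + 1) + 1 = j + 1 + i + 1 := by omega
              rw [this])
          | norm_num
      have E2 : (∏ i ∈ Finset.range (m - (j + 1) + 1), (1 - x ^ (i + 1)))
          = (∏ i ∈ Finset.range (m - (j + 1)), (1 - x ^ (i + 1))) * (1 - x ^ (m - j)) := by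
        rw [Finset.prod_range_succ, emj]
      have E3 : (∏ i ∈ Finset.range (m - (j + 1) + 1), (1 - x ^ (j + 1 + i + 1)))
          = (∏ i ∈ Finset.range (m - (j + 1)), (1 - x ^ (j + 1 + i + 1))) * (1 - x ^ (m + 1)) := by
        rw [Finset.prod_range_succ]
        have : j + 1 + (m - (j + 1)) + 1 = m + 1 := by omega
        rw [this]
      rw [E2, E3]
      calc gb x m j * ((∏ i ∈ Finset.range (m - (j+1)), (1 - x ^ (i + 1))) * (1 - x ^ (m - j)))
            + x ^ (j + 1) * gb x m (j + 1) *
              ((∏ i ∈ Finset.range (m - (j+1)), (1 - x ^ (i + 1))) * (1 - x ^ (m - j)))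
          = (gb x m j * ∏ i ∈ Finset.range (m - (j+1) + 1), (1 - x ^ (i + 1)))
            + x ^ (j + 1) * (1 - x ^ (m - j)) *
              (gb x m (j + 1) * ∏ i ∈ Finset.range (m - (j+1)), (1 - x ^ (i + 1))) := by
            rw [E2]; ring
        _ = (1 - x ^ (j + 1)) * (∏ i ∈ Finset.range (m - (j + 1)), (1 - x ^ (j + 1 + i + 1)))
            + x ^ (j + 1) * (1 - x ^ (m - j)) *
              ∏ i ∈ Finset.range (m - (j + 1)), (1 - x ^ (j + 1 + i + 1)) := by
            rw [IH1, IH2, E1]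
        _ = (∏ i ∈ Finset.range (m - (j + 1)), (1 - x ^ (j + 1 + i + 1))) * (1 - x ^ (m + 1)) := by
            have e4 : m + 1 = (j + 1) + (m - j) := by omega
            rw [e4, pow_add]
            ring

lemma gb_one_geom (x : R) : ∀ m : ℕ, (1 - x) * gb x m 1 = 1 - x ^ m
  | 0 => by simp [gb_eq_zero]
  | m + 1 => by
    rw [gb_succ_succ, gb_zero_right]
    have := gb_one_geom x m
    rw [pow_succ]
    linear_combination x * this

lemma gb_two (x : R) (m j : ℕ) (hj : j ≤ m) :
    gb x (m + 2) (j + 2) = x ^ (m - j) * gb x m j + (1 + x ^ (m + 1)) * gb x m (j + 1)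
      + x ^ (j + 2) * gb x m (j + 2) := by
  show gb x (m + 1 + 1) (j + 1 + 1) = _
  rw [gb_pascal2, gb_succ_succ, gb_succ_succ]
  have e1 : m + 1 - (j + 1) = m - j := by omega
  have hx : x ^ (m - j) * x ^ (j + 1) = x ^ (m + 1) := by
    rw [← pow_add]; congr 1; omega
  rw [e1]
  linear_combination gb x m (j + 1) * hx

/-- triangular numbers `d*(d+1)/2` -/
def tri : ℕ → ℕ
  | 0 => 0
  | d + 1 => tri d + d + 1

/-- `d*(d-1)/2` -/
def tri' : ℕ → ℕ
  | 0 => 0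
  | d + 1 => tri' d + d

/-- `cc n j = (j-n)*(j-n-1)/2` for the integer value `j - n`. -/
def cc (n j : ℕ) : ℕ := tri (n - j) + tri' (j - n)

lemma cc_succ_succ (n j : ℕ) : cc (n + 1) (j + 2) = cc n (j + 1) := by
  unfold cc
  have e1 : n + 1 - (j + 2) = n - (j + 1) := by omega
  have e2 : j + 2 - (n + 1) = j + 1 - n := by omega
  rw [e1, e2]

lemma ccE1 (n j : ℕ) (hj : j ≤ 2 * n) : cc n (j + 1) + (2 * n - j) = cc n j + n := by
  rcases lt_or_ge j n with hl | hl
  · obtain ⟨e, he⟩ : ∃ e, n - j = e + 1 := ⟨n - j - 1, by omega⟩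
    have h1 : n - (j + 1) = e := by omega
    have h2 : j + 1 - n = 0 := by omega
    have h3 : j - n = 0 := by omega
    unfold cc
    rw [he, h1, h2, h3]
    show tri e + tri' 0 + (2 * n - j) = tri e + e + 1 + tri' 0 + n
    omega
  · have h1 : n - (j + 1) = 0 := by omega
    have h2 : n - j = 0 := by omega
    obtain ⟨d, hd⟩ : ∃ d, j - n = d := ⟨j - n, rfl⟩
    have h3 : j + 1 - n = d + 1 := by omega
    unfold cc
    rw [h1, h2, h3, hd]
    show tri 0 + (tri' d + d) + (2 * n - j) = tri 0 + tri' d + n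
    omega

lemma ccE2 (n j : ℕ) : cc n (j + 1) + (j + 2) = cc n (j + 2) + (n + 1) := by
  rcases lt_or_ge (j + 1) n with hl | hl
  · obtain ⟨e, he⟩ : ∃ e, n - (j + 1) = e + 1 := ⟨n - (j + 1) - 1, by omega⟩
    have h1 : n - (j + 2) = e := by omega
    have h2 : j + 1 - n = 0 := by omega
    have h3 : j + 2 - n = 0 := by omega
    unfold cc
    rw [he, h1, h2, h3]
    show tri e + e + 1 + tri' 0 + (j + 2) = tri e + tri' 0 + (n + 1)
    omega
  · have h1 : n - (j + 1) = 0 := by omega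
    have h2 : n - (j + 2) = 0 := by omega
    obtain ⟨d, hd⟩ : ∃ d, j + 1 - n = d := ⟨j + 1 - n, rfl⟩
    have h3 : j + 2 - n = d + 1 := by omega
    have hd' : d + n = j + 1 := by omega
    unfold cc
    rw [h1, h2, h3, hd]
    show tri 0 + tri' d + (j + 2) = tri 0 + (tri' d + d) + (n + 1)
    omega

lemma cc_succ_zero (n : ℕ) : cc (n + 1) 0 = cc n 0 + (n + 1) := by
  unfold cc
  simp only [Nat.sub_zero, Nat.zero_sub]
  show tri n + n + 1 + tri' 0 = tri n + tri' 0 + (n + 1)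
  omega

lemma cc_succ_one (n : ℕ) : cc (n + 1) 1 = cc n 0 := by
  unfold cc
  have e1 : n + 1 - 1 = n := by omega
  have e2 : (1 : ℕ) - (n + 1) = 0 := by omega
  rw [e1, e2]
  simp

lemma cc_one (n : ℕ) : cc n 1 + (n + 1) = cc n 0 + 1 := by
  rcases Nat.eq_zero_or_pos n with h | h
  · subst h; rfl
  · obtain ⟨e, he⟩ : ∃ e, n = e + 1 := ⟨n - 1, by omega⟩
    subst he
    unfold cc
    have e1 : e + 1 - 1 = e := by omega
    have e2 : (1:ℕ) - (e + 1) = 0 := by omega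
    have e3 : (0:ℕ) - (e + 1) = 0 := by omega
    rw [e1, e2, e3, Nat.sub_zero]
    show tri e + tri' 0 + (e + 1 + 1) = tri e + e + 1 + tri' 0 + 1
    omega

/-- coefficient of `t^j` in the finite Jacobi triple product expansion -/
def keyC (x : R) (n j : ℕ) : R := (-1) ^ (j + n) * gb x (2 * n) j * x ^ (cc n j)

lemma keyC_top (x : R) {n j : ℕ} (h : 2 * n < j) : keyC x n j = 0 := by
  unfold keyC
  rw [gb_eq_zero x h]
  ring

lemma keyC_B0 (x : R) (n : ℕ) : keyC x (n + 1) 0 = -(x ^ (n + 1) * keyC x n 0) := by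
  unfold keyC
  rw [gb_zero_right, gb_zero_right, cc_succ_zero, pow_add]
  ring

lemma keyC_B1 (x t : R) (n : ℕ) :
    keyC x (n + 1) 1 = (1 + x ^ (2 * n + 1)) * keyC x n 0 - x ^ (n + 1) * keyC x n 1 := by
  unfold keyC
  rw [gb_zero_right, cc_succ_one]
  have e1 : x ^ (cc n 1) * x ^ (n + 1) = x ^ (cc n 0) * x ^ 1 := by
    rw [← pow_add, ← pow_add, cc_one]
  have e2 : gb x (2 * (n + 1)) 1 = 1 + x ^ (2 * n + 1) + x * gb x (2 * n) 1 := by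
    show gb x (2 * n + 1 + 1) 1 = _
    rw [gb_succ_succ, gb_zero_right]
    conv_lhs => rw [show 2 * n + 1 = 2 * n + 1 from rfl]
    rw [show gb x (2 * n + 1) 1 = gb x (2 * n) 0 + x ^ (0 + 1) * gb x (2 * n) 1 from rfl]
    rw [gb_zero_right, pow_succ]
    have hg := gb_one_geom x (2 * n)
    linear_combination (-x) * hg
  rw [e2]
  linear_combination (-((-1:R) ^ n * gb x (2 * n) 1)) * e1

lemma keyC_step (x : R) (n j : ℕ) (hj : j ≤ 2 * n) :
    keyC x (n + 1) (j + 2) = (1 + x ^ (2 * n + 1)) * keyC x n (j + 1)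
      - x ^ (n + 1) * keyC x n (j + 2) - x ^ n * keyC x n j := by
  unfold keyC
  have e0 : 2 * (n + 1) = 2 * n + 2 := by ring
  rw [e0, gb_two x (2 * n) j hj, cc_succ_succ]
  have h1 : x ^ (cc n (j + 1)) * x ^ (2 * n - j) = x ^ (cc n j) * x ^ n := by
    rw [← pow_add, ← pow_add, ccE1 n j hj]
  have h2 : x ^ (cc n (j + 1)) * x ^ (j + 2) = x ^ (cc n (j + 2)) * x ^ (n + 1) := by
    rw [← pow_add, ← pow_add, ccE2 n j]
  linear_combination (-((-1:R) ^ (j + n) * gb x (2 * n) j)) * h1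
    + (-((-1:R) ^ (j + n) * gb x (2 * n) (j + 2))) * h2

lemma sum_shift1 (f : ℕ → R) (m : ℕ) (hf : f m = 0) :
    ∑ j ∈ Finset.range m, f (j + 1) = ∑ j ∈ Finset.range m, f j - f 0 := by
  have h1 := Finset.sum_range_succ' f m
  have h2 := Finset.sum_range_succ f m
  rw [hf, add_zero] at h2
  linear_combination h2 - h1

lemma sum_shift2 (f : ℕ → R) (m : ℕ) (h1 : f m = 0) (h2 : f (m + 1) = 0) :
    ∑ j ∈ Finset.range m, f (j + 2) = ∑ j ∈ Finset.range m, f j - f 0 - f 1 := by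
  have a1 := Finset.sum_range_succ' f (m + 1)
  have a2 := Finset.sum_range_succ' (fun j => f (j + 1)) m
  have a3 := Finset.sum_range_succ f (m + 1)
  have a4 := Finset.sum_range_succ f m
  rw [h2, add_zero] at a3
  rw [h1, add_zero] at a4
  rw [a4] at a3
  linear_combination a3 - a1 - a2

theorem key (x t : R) : ∀ n : ℕ,
    ∏ j ∈ Finset.range n, ((1 - t * x ^ j) * (t - x ^ (j + 1))) =
      ∑ j ∈ Finset.range (2 * n + 1), keyC x n j * t ^ j
  | 0 => by
    simp [keyC, cc, tri, tri']
  | n + 1 => by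
    rw [Finset.prod_range_succ, key x t n]
    have e0 : 2 * (n + 1) + 1 = (2 * n + 1) + 2 := by ring
    rw [e0]
    set m := 2 * n + 1 with hm
    -- peel the top sum twice from below
    have p1 := Finset.sum_range_succ' (fun j => keyC x (n + 1) j * t ^ j) (m + 1)
    have p2 := Finset.sum_range_succ' (fun j => keyC x (n + 1) (j + 1) * t ^ (j + 1)) m
    rw [p1, p2]
    -- rewrite the shifted sum via keyC_step
    have hstep : ∑ j ∈ Finset.range m, keyC x (n + 1) (j + 1 + 1) * t ^ (j + 1 + 1)
        = ∑ j ∈ Finset.range m, ((1 + x ^ (2 * n + 1)) * keyC x n (j + 1) * t ^ (j + 2)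
            - x ^ (n + 1) * keyC x n (j + 2) * t ^ (j + 2)
            - x ^ n * keyC x n j * t ^ (j + 2)) := by
      refine Finset.sum_congr rfl fun j hj => ?_
      have hj' : j ≤ 2 * n := by
        have := Finset.mem_range.mp hj; omega
      rw [keyC_step x n j hj']
      ring
    rw [hstep]
    rw [Finset.sum_sub_distrib, Finset.sum_sub_distrib]
    -- handle the two shifted sums
    have s1 : ∑ j ∈ Finset.range m, (1 + x ^ (2 * n + 1)) * keyC x n (j + 1) * t ^ (j + 2)
        = ∑ j ∈ Finset.range m, (1 + x ^ (2 * n + 1)) * keyC x n j * t ^ (j + 1)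
          - (1 + x ^ (2 * n + 1)) * keyC x n 0 * t ^ 1 := by
      exact sum_shift1 (fun j => (1 + x ^ (2 * n + 1)) * keyC x n j * t ^ (j + 1)) m
        (by simp [keyC_top x (show 2 * n < m by omega)])
    have s2 : ∑ j ∈ Finset.range m, x ^ (n + 1) * keyC x n (j + 2) * t ^ (j + 2)
        = ∑ j ∈ Finset.range m, x ^ (n + 1) * keyC x n j * t ^ j
          - x ^ (n + 1) * keyC x n 0 * t ^ 0 - x ^ (n + 1) * keyC x n 1 * t ^ 1 := by
      exact sum_shift2 (fun j => x ^ (n + 1) * keyC x n j * t ^ j) m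
        (by simp [keyC_top x (show 2 * n < m by omega)])
        (by simp [keyC_top x (show 2 * n < m + 1 by omega)])
    rw [s1, s2]
    -- expand the product side
    rw [Finset.sum_mul]
    have hexp : ∑ j ∈ Finset.range m, keyC x n j * t ^ j * ((1 - t * x ^ n) * (t - x ^ (n + 1)))
        = ∑ j ∈ Finset.range m, ((1 + x ^ (2 * n + 1)) * keyC x n j * t ^ (j + 1)
            - x ^ (n + 1) * keyC x n j * t ^ j - x ^ n * keyC x n j * t ^ (j + 2)) := by
      refine Finset.sum_congr rfl fun j hj => ?_
      have hxx : x ^ (2 * n + 1) = x ^ n * x ^ (n + 1) := by rw [← pow_add]; congr 1; omega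
      rw [hxx]
      ring
    rw [hexp, Finset.sum_sub_distrib, Finset.sum_sub_distrib]
    have B0 := keyC_B0 x n
    have B1 := keyC_B1 x t n
    rw [B0, B1]
    ring

lemma tri_int : ∀ d : ℕ, (2 * tri d : ℤ) = (d : ℤ) * (d + 1)
  | 0 => by simp [tri]
  | d + 1 => by
    have := tri_int d
    show (2 * (tri d + d + 1) : ℤ) = _
    push_cast at this ⊢
    ring_nf
    ring_nf at this
    linarith

lemma tri'_int : ∀ d : ℕ, (2 * tri' d : ℤ) = (d : ℤ) * (d - 1)
  | 0 => by simp [tri']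
  | d + 1 => by
    have := tri'_int d
    show (2 * (tri' d + d) : ℤ) = _
    push_cast at this ⊢
    ring_nf
    ring_nf at this
    linarith

lemma cc_int (n j : ℕ) : (2 * cc n j : ℤ) = ((j : ℤ) - n) * ((j : ℤ) - n - 1) := by
  unfold cc
  rcases le_or_gt j n with h | h
  · have h2 : j - n = 0 := by omega
    have h3 : ((n - j : ℕ) : ℤ) = (n : ℤ) - j := by omega
    rw [h2]
    have h4 := tri_int (n - j)
    rw [h3] at h4
    simp only [tri']
    push_cast
    linear_combination h4
  · have h2 : n - j = 0 := by omega
    have h3 : ((j - n : ℕ) : ℤ) = (j : ℤ) - n := by omega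
    rw [h2]
    have h4 := tri'_int (j - n)
    rw [h3] at h4
    simp only [tri]
    push_cast
    linear_combination h4

lemma tri_ge (d : ℕ) : d ≤ tri d := by
  induction d with
  | zero => simp [tri]
  | succ d ih => show d + 1 ≤ tri d + d + 1; omega

lemma cc_ge (n j : ℕ) : n - j ≤ cc n j := by
  unfold cc
  have := tri_ge (n - j)
  omega

/-- `f = 1 + O(X^e)` -/
def Near1 (f : PowerSeries ℤ) (e : ℕ) : Prop := ∃ h, f = 1 + X ^ e * h

lemma near1_mono {f : PowerSeries ℤ} {e e' : ℕ} (h : Near1 f e) (he : e' ≤ e) : Near1 f e' := by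
  obtain ⟨g, hg⟩ := h
  exact ⟨X ^ (e - e') * g, by rw [hg, ← mul_assoc, ← pow_add]; congr 3; omega⟩

lemma near1_mul {f g : PowerSeries ℤ} {e : ℕ} (hf : Near1 f e) (hg : Near1 g e) :
    Near1 (f * g) e := by
  obtain ⟨a, ha⟩ := hf
  obtain ⟨b, hb⟩ := hg
  exact ⟨a + b + X ^ e * (a * b), by rw [ha, hb]; ring⟩

lemma near1_one (e : ℕ) : Near1 (1 : PowerSeries ℤ) e := ⟨0, by ring⟩

lemma near1_coeff {f : PowerSeries ℤ} {e : ℕ} (h : Near1 f e) {d : ℕ} (hd : d < e) :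
    coeff d f = if d = 0 then 1 else 0 := by
  obtain ⟨g, hg⟩ := h
  rw [hg, map_add, coeff_one, coeff_X_pow_mul' g e d, if_neg (show ¬ e ≤ d by omega), add_zero]

lemma coeff_mul_near1 {f g : PowerSeries ℤ} {N : ℕ} (h : Near1 g (N + 1)) :
    coeff N (f * g) = coeff N f := by
  obtain ⟨b, hb⟩ := h
  rw [hb, mul_add, mul_one, map_add]
  rw [show f * (X ^ (N + 1) * b) = X ^ (N + 1) * (f * b) by ring]
  rw [coeff_X_pow_mul' (f * b) (N + 1) N, if_neg (show ¬ N + 1 ≤ N by omega), add_zero]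

lemma seriesProd_coeff_stable (f : ℕ → PowerSeries ℤ) (hf : ∀ n, Near1 (f n) (n + 1))
    (N : ℕ) : ∀ m, N + 1 ≤ m →
    coeff N (seriesProd f) = coeff N (∏ n ∈ Finset.range m, f n) := by
  intro m hm
  induction m with
  | zero => omega
  | succ m ih =>
    rcases Nat.eq_or_lt_of_le hm with h | h
    · rw [← h]; simp [seriesProd, coeff_mk]
    · have hm' : N + 1 ≤ m := by omega
      rw [ih hm', Finset.prod_range_succ,
        coeff_mul_near1 (near1_mono (hf m) (by omega))]

lemma seriesProd_mul (f g : ℕ → PowerSeries ℤ) (hf : ∀ n, Near1 (f n) (n + 1))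
    (hg : ∀ n, Near1 (g n) (n + 1)) :
    seriesProd f * seriesProd g = seriesProd (fun n => f n * g n) := by
  ext N
  rw [coeff_mul]
  have h1 : ∀ p ∈ Finset.HasAntidiagonal.antidiagonal N,
      coeff p.1 (seriesProd f) * coeff p.2 (seriesProd g)
        = coeff p.1 (∏ n ∈ Finset.range (N + 1), f n)
          * coeff p.2 (∏ n ∈ Finset.range (N + 1), g n) := by
    intro p hp
    have := Finset.HasAntidiagonal.antidiagonal.fst_le hp
    have := Finset.HasAntidiagonal.antidiagonal.snd_le hp
    rw [seriesProd_coeff_stable f hf p.1 (N + 1) (by omega),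
      seriesProd_coeff_stable g hg p.2 (N + 1) (by omega)]
  rw [Finset.sum_congr rfl h1, ← coeff_mul, ← Finset.prod_mul_distrib]
  rw [seriesProd_coeff_stable (fun n => f n * g n)
    (fun n => near1_mul (hf n) (hg n)) N (N + 1) le_rfl]

lemma seriesProd_congr {f g : ℕ → PowerSeries ℤ} (h : ∀ n, f n = g n) :
    seriesProd f = seriesProd g := by
  unfold seriesProd
  exact congrArg PowerSeries.mk (funext fun N =>
    congrArg _ (Finset.prod_congr rfl fun n _ => h n))

lemma constCoeff_one_sub_X_pow (n : ℕ) :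
    constantCoeff ((1 : PowerSeries ℤ) - X ^ (n + 1)) = ((1 : ℤˣ) : ℤ) := by
  rw [map_sub, map_pow, constantCoeff_X, constantCoeff_one]
  simp

lemma one_sub_X_pow_mul_inv (n : ℕ) :
    ((1 : PowerSeries ℤ) - X ^ (n + 1)) * invOfUnit (1 - X ^ (n + 1)) (1 : ℤˣ) = 1 :=
  mul_invOfUnit _ _ (constCoeff_one_sub_X_pow n)

lemma near1_one_sub_X_pow (n : ℕ) : Near1 (1 - X ^ (n + 1) : PowerSeries ℤ) (n + 1) :=
  ⟨-1, by ring⟩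

lemma near1_invOfUnit (n : ℕ) :
    Near1 (invOfUnit ((1 : PowerSeries ℤ) - X ^ (n + 1)) (1 : ℤˣ)) (n + 1) := by
  refine ⟨invOfUnit ((1 : PowerSeries ℤ) - X ^ (n + 1)) (1 : ℤˣ), ?_⟩
  have h := one_sub_X_pow_mul_inv n
  linear_combination h

/-- the theta-type series `∑_{k ∈ ℤ} (-1)^k q^(M k(k-1)/2 + b k)` -/
noncomputable def theta (M b : ℕ) : PowerSeries ℤ :=
  PowerSeries.mk fun N => ∑ k ∈ Finset.Icc (-(N : ℤ)) (N : ℤ),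
    if (M : ℤ) * k * (k - 1) + 2 * b * k = 2 * N then (-1) ^ k.natAbs else 0

lemma theta_uniq {M b : ℕ} (hb : 0 < b) (hbM : b < M) (h2 : 2 * b ≠ M) {N : ℕ} {k k' : ℤ}
    (hk : (M : ℤ) * k * (k - 1) + 2 * b * k = 2 * N)
    (hk' : (M : ℤ) * k' * (k' - 1) + 2 * b * k' = 2 * N) : k = k' := by
  have h0 : (k - k') * ((M : ℤ) * (k + k' - 1) + 2 * b) = 0 := by linear_combination hk - hk'
  rcases mul_eq_zero.mp h0 with h | h
  · omega
  · exfalso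
    have hM : (0 : ℤ) < M := by exact_mod_cast (show 0 < M by omega)
    have hb' : (0 : ℤ) < b := by exact_mod_cast hb
    have hbM' : (b : ℤ) < M := by exact_mod_cast hbM
    have h2' : 2 * (b : ℤ) ≠ M := by exact_mod_cast h2
    rcases lt_trichotomy (k + k' - 1) (-1) with hs | hs | hs
    · nlinarith
    · rw [hs] at h; omega
    · nlinarith

lemma theta_bound {M b : ℕ} (hb : 0 < b) (hbM : b < M) {N : ℕ} {k : ℤ}
    (hk : (M : ℤ) * k * (k - 1) + 2 * b * k = 2 * N) : -(N : ℤ) ≤ k ∧ k ≤ N := by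
  have hM : (0 : ℤ) < M := by exact_mod_cast (show 0 < M by omega)
  have hb' : (0 : ℤ) < b := by exact_mod_cast hb
  have hbM' : (b : ℤ) < M := by exact_mod_cast hbM
  constructor
  · rcases le_or_gt 0 k with h | h
    · have : (0 : ℤ) ≤ N := by exact_mod_cast Nat.zero_le N
      omega
    · nlinarith [mul_nonneg (mul_nonneg hM.le (show (0:ℤ) ≤ -k by omega))
        (show (0:ℤ) ≤ -k - 1 + 1 by omega),
        mul_le_mul_of_nonneg_left (show (2:ℤ) ≤ 2*((M:ℤ) - b) by omega)
        (show (0:ℤ) ≤ -k by omega)]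
  · rcases le_or_gt k 0 with h | h
    · have : (0 : ℤ) ≤ N := by exact_mod_cast Nat.zero_le N
      omega
    · nlinarith [mul_nonneg (mul_nonneg hM.le (show (0:ℤ) ≤ k by omega))
        (show (0:ℤ) ≤ k - 1 by omega),
        mul_le_mul_of_nonneg_left (show (2:ℤ) ≤ 2*(b:ℤ) by omega)
        (show (0:ℤ) ≤ k by omega)]

lemma theta_coeff_of_ex {M b : ℕ} (hb : 0 < b) (hbM : b < M) (h2 : 2 * b ≠ M) {N : ℕ} {k₀ : ℤ}
    (hk : (M : ℤ) * k₀ * (k₀ - 1) + 2 * b * k₀ = 2 * N) :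
    coeff N (theta M b) = (-1) ^ k₀.natAbs := by
  rw [theta, coeff_mk]
  rw [Finset.sum_eq_single k₀]
  · rw [if_pos hk]
  · intro k _ hne
    rw [if_neg]
    intro hc
    exact hne (theta_uniq hb hbM h2 hc hk)
  · intro hmem
    exact absurd (Finset.mem_Icc.mpr ⟨(theta_bound hb hbM hk).1, (theta_bound hb hbM hk).2⟩)
      hmem

lemma theta_coeff_of_not {M b : ℕ} {N : ℕ}
    (h : ∀ k : ℤ, ¬((M : ℤ) * k * (k - 1) + 2 * b * k = 2 * N)) :
    coeff N (theta M b) = 0 := by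
  rw [theta, coeff_mk]
  exact Finset.sum_eq_zero fun k _ => if_neg (h k)

lemma near1_one_sub_pow (c : ℕ) : Near1 ((1 : PowerSeries ℤ) - X ^ c) c := ⟨-1, by ring⟩

lemma near1_prod {s : Finset ℕ} {f : ℕ → PowerSeries ℤ} {e : ℕ}
    (h : ∀ i ∈ s, Near1 (f i) e) : Near1 (∏ i ∈ s, f i) e :=
  Finset.prod_induction f (fun g => Near1 g e) (fun _ _ => near1_mul) (near1_one e) h

lemma negpow_congr (a b : ℕ) (h : a % 2 = b % 2) : (-1 : ℤ) ^ a = (-1) ^ b := by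
  rw [← Nat.div_add_mod a 2, ← Nat.div_add_mod b 2, h, pow_add, pow_add, pow_mul, pow_mul]
  norm_num

lemma negpow_natAbs (j n : ℕ) : ((-1 : ℤ)) ^ (j + n) = (-1) ^ (((j : ℤ) - n).natAbs) := by
  rcases le_or_gt n j with h | h
  · have : ((j : ℤ) - n).natAbs = j - n := by omega
    rw [this]
    exact negpow_congr _ _ (by omega)
  · have : ((j : ℤ) - n).natAbs = n - j := by omega
    rw [this]
    exact negpow_congr _ _ (by omega)

lemma near1_x_factor (M' c : ℕ) : Near1 ((1 : PowerSeries ℤ) - (X ^ M') ^ c) (M' * c) := by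
  rw [← pow_mul]
  exact near1_one_sub_pow (M' * c)

/-- `G j = gb (2n) j * ∏_{m<n} (1 - x^{m+1})` is `1 + O(x^{min(j,2n-j)+1})`. -/
lemma near1_gb_mul_prod (M' n j : ℕ) (hj : j ≤ 2 * n) :
    Near1 (gb (X ^ M' : PowerSeries ℤ) (2 * n) j * ∏ m ∈ Finset.range n, (1 - (X ^ M') ^ (m + 1)))
      (M' * (min j (2 * n - j) + 1)) := by
  set x : PowerSeries ℤ := X ^ M' with hxdef
  have hfac : ∀ c : ℕ, Near1 (1 - x ^ c) (M' * c) := near1_x_factor M'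
  rcases le_or_gt j n with hjn | hjn
  · have hmin : min j (2 * n - j) = j := by omega
    rw [hmin]
    have hsplit : ∏ m ∈ Finset.range n, (1 - x ^ (m + 1))
        = (∏ i ∈ Finset.range j, (1 - x ^ (i + 1)))
          * ∏ i ∈ Finset.range (n - j), (1 - x ^ (j + i + 1)) := by
      conv_lhs => rw [show n = j + (n - j) by omega, Finset.prod_range_add]
    rw [hsplit, ← mul_assoc, gb_prod_left x (2 * n) j hj]
    refine near1_mul (near1_prod fun i hi => ?_) (near1_prod fun i hi => ?_)
    · exact near1_mono (hfac (2 * n - j + i + 1))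
        (Nat.mul_le_mul_left _ (by have := Finset.mem_range.mp hi; omega))
    · exact near1_mono (hfac (j + i + 1)) (Nat.mul_le_mul_left _ (by omega))
  · have hmin : min j (2 * n - j) = 2 * n - j := by omega
    rw [hmin]
    have hsplit : ∏ m ∈ Finset.range n, (1 - x ^ (m + 1))
        = (∏ i ∈ Finset.range (2 * n - j), (1 - x ^ (i + 1)))
          * ∏ i ∈ Finset.range (j - n), (1 - x ^ (2 * n - j + i + 1)) := by
      conv_lhs => rw [show n = (2 * n - j) + (j - n) by omega, Finset.prod_range_add]
    rw [hsplit, ← mul_assoc, gb_prod_right x (2 * n) j hj]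
    refine near1_mul (near1_prod fun i hi => ?_) (near1_prod fun i hi => ?_)
    · exact near1_mono (hfac (j + i + 1)) (Nat.mul_le_mul_left _ (by omega))
    · exact near1_mono (hfac (2 * n - j + i + 1)) (Nat.mul_le_mul_left _ (by omega))

lemma blocks (M aa bb : ℕ) (h1 : 0 < aa) (h2 : aa < bb) (h3 : bb < M) : ∀ n : ℕ,
    ∏ i ∈ Finset.range (M * n),
      (if (i + 1) % M = 0 ∨ (i + 1) % M = aa ∨ (i + 1) % M = bb
        then (1 : PowerSeries ℤ) - X ^ (i + 1) else 1)
    = (∏ m ∈ Finset.range n, ((1 - X ^ (M * m + aa)) * (1 - X ^ (M * m + bb))))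
      * ∏ m ∈ Finset.range n, (1 - X ^ (M * (m + 1)))
  | 0 => by simp
  | n + 1 => by
    have IH := blocks M aa bb h1 h2 h3 n
    conv_lhs => rw [show M * (n + 1) = M * n + M by ring, Finset.prod_range_add]
    rw [IH]
    have hcongr : ∀ i ∈ Finset.range M,
        (if (M * n + i + 1) % M = 0 ∨ (M * n + i + 1) % M = aa ∨ (M * n + i + 1) % M = bb
          then (1 : PowerSeries ℤ) - X ^ (M * n + i + 1) else 1)
        = (if i ∈ ({aa - 1, bb - 1, M - 1} : Finset ℕ)
            then (1 : PowerSeries ℤ) - X ^ (M * n + i + 1) else 1) := by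
      intro i hi
      have hiM : i < M := Finset.mem_range.mp hi
      have hmod : (M * n + i + 1) % M = (i + 1) % M := by
        rw [show M * n + i + 1 = M * n + (i + 1) by ring]
        exact Nat.mul_add_mod M n (i + 1)
      have hmem : (i ∈ ({aa - 1, bb - 1, M - 1} : Finset ℕ))
          ↔ (i = aa - 1 ∨ i = bb - 1 ∨ i = M - 1) := by
        simp [Finset.mem_insert, Finset.mem_singleton]
      rcases Nat.lt_or_ge (i + 1) M with hlt | hge
      · have hv : (i + 1) % M = i + 1 := Nat.mod_eq_of_lt hlt
        by_cases hc : i = aa - 1 ∨ i = bb - 1 ∨ i = M - 1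
        · rw [if_pos (hmem.mpr hc), if_pos (by rw [hmod, hv]; omega)]
        · rw [if_neg (fun hmm => hc (hmem.mp hmm)), if_neg (by rw [hmod, hv]; omega)]
      · have hiM1 : i + 1 = M := by omega
        have hv : (M * n + i + 1) % M = 0 := by rw [hmod, hiM1]; exact Nat.mod_self M
        rw [if_pos (hmem.mpr (Or.inr (Or.inr (by omega)))), if_pos (Or.inl hv)]
    rw [Finset.prod_congr rfl hcongr, Finset.prod_ite_mem]
    have hsub : ({aa - 1, bb - 1, M - 1} : Finset ℕ) ⊆ Finset.range M := by
      intro x hx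
      simp only [Finset.mem_insert, Finset.mem_singleton] at hx
      rw [Finset.mem_range]
      omega
    rw [Finset.inter_eq_right.mpr hsub]
    rw [Finset.prod_insert (by simp; omega), Finset.prod_insert (by simp; omega),
      Finset.prod_singleton]
    have hMn : M * (n + 1) = M * n + M := by ring
    rw [show M * n + (aa - 1) + 1 = M * n + aa by omega,
      show M * n + (bb - 1) + 1 = M * n + bb by omega,
      show M * n + (M - 1) + 1 = M * (n + 1) by omega]
    rw [Finset.prod_range_succ, Finset.prod_range_succ]
    ring

lemma key_bounds (M bb N n j : ℕ) (hbb : 0 < bb) (hbM : bb + 1 ≤ M) (hM3 : 3 ≤ M)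
    (hn : n = 2 * N + 2) (hj : j ≤ 2 * n) :
    bb * n ≤ M * cc n j + bb * j ∧
    (M * cc n j + bb * j ≤ N + bb * n →
      N + bb * n - (M * cc n j + bb * j) < M * (min j (2 * n - j) + 1)) := by
  have hcge := cc_ge n j
  have q1 : M * (n - j) ≤ M * cc n j := Nat.mul_le_mul_left M hcge
  rcases le_or_gt j n with hjn | hjn
  · have hmin : min j (2 * n - j) = j := by omega
    have s1 : bb * (n - j) + bb * j = bb * n := by rw [← Nat.mul_add]; congr 1; omega
    have s2 : bb * (n - j) + (n - j) ≤ M * (n - j) := by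
      have hh : (bb + 1) * (n - j) ≤ M * (n - j) := Nat.mul_le_mul_right _ hbM
      have hexp : (bb + 1) * (n - j) = bb * (n - j) + (n - j) := by ring
      omega
    constructor
    · omega
    · intro hle
      have hNj : n - j ≤ N := by omega
      have m1 : 3 * (j + 1) ≤ M * (j + 1) := Nat.mul_le_mul_right _ hM3
      rw [hmin]
      omega
  · have hmin : min j (2 * n - j) = 2 * n - j := by omega
    have s1 : bb * (j - n) + bb * n = bb * j := by rw [← Nat.mul_add]; congr 1; omega
    have s3 : (j - n) ≤ bb * (j - n) := Nat.le_mul_of_pos_left _ hbb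
    constructor
    · omega
    · intro hle
      have hNj : j - n ≤ N := by omega
      have m1 : 3 * (2 * n - j + 1) ≤ M * (2 * n - j + 1) := Nat.mul_le_mul_right _ hM3
      rw [hmin]
      omega

theorem W_eq_theta (M aa bb : ℕ) (h1 : 0 < aa) (h2 : aa < bb) (h3 : bb < M)
    (hab : aa + bb = M) (h2b : 2 * bb ≠ M) :
    seriesProd (fun i => if (i + 1) % M = 0 ∨ (i + 1) % M = aa ∨ (i + 1) % M = bb
      then (1 : PowerSeries ℤ) - X ^ (i + 1) else 1) = theta M bb := by
  have hbb : 0 < bb := by omega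
  have hM3 : 3 ≤ M := by omega
  have hf : ∀ i, Near1 (if (i + 1) % M = 0 ∨ (i + 1) % M = aa ∨ (i + 1) % M = bb
      then (1 : PowerSeries ℤ) - X ^ (i + 1) else 1) (i + 1) := by
    intro i
    split
    · exact near1_one_sub_pow (i + 1)
    · exact near1_one _
  ext N
  obtain ⟨n, hn⟩ : ∃ n : ℕ, n = 2 * N + 2 := ⟨_, rfl⟩
  have hMn : N + 1 ≤ M * n := by
    have : 3 * n ≤ M * n := Nat.mul_le_mul_right n hM3
    omega
  rw [seriesProd_coeff_stable _ hf N (M * n) hMn, blocks M aa bb h1 h2 h3 n]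
  -- bridge between ℕ-conditions and ℤ-conditions
  have hbridge : ∀ j : ℕ, (M * cc n j + bb * j = N + bb * n) ↔
      ((M : ℤ) * ((j : ℤ) - n) * (((j : ℤ) - n) - 1) + 2 * bb * ((j : ℤ) - n) = 2 * N) := by
    intro j
    have hcc := cc_int n j
    push_cast at hcc
    constructor
    · intro h
      have h' : ((M : ℤ)) * (cc n j : ℤ) + bb * j = (N : ℤ) + bb * n := by exact_mod_cast h
      linear_combination 2 * h' - (M : ℤ) * hcc
    · intro h
      have h2' : (2 : ℤ) * ((M : ℤ) * (cc n j : ℤ) + bb * j) = 2 * ((N : ℤ) + bb * n) := by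
        linear_combination h + (M : ℤ) * hcc -- trial2
      omega
  -- KEY specialization
  have hkey := key (X ^ M : PowerSeries ℤ) (X ^ bb) n
  have hfact : ∀ j, ((1 : PowerSeries ℤ) - X ^ bb * (X ^ M) ^ j) * (X ^ bb - (X ^ M) ^ (j + 1))
      = X ^ bb * ((1 - X ^ (M * j + aa)) * (1 - X ^ (M * j + bb))) := by
    intro j
    have c1 : (X : PowerSeries ℤ) ^ bb * (X ^ M) ^ j = X ^ (M * j + bb) := by
      rw [← pow_mul, ← pow_add]; congr 1; ring
    have c2 : ((X : PowerSeries ℤ) ^ M) ^ (j + 1) = X ^ bb * X ^ (M * j + aa) := by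
      rw [← pow_mul, ← pow_add]; congr 1
      have : M * (j + 1) = M * j + M := by ring
      omega
    rw [c1, c2]; ring
  rw [Finset.prod_congr rfl (fun j _ => hfact j), Finset.prod_mul_distrib,
    Finset.prod_const, Finset.card_range, ← pow_mul] at hkey
  set A := ∏ m ∈ Finset.range n, ((1 : PowerSeries ℤ) - X ^ (M * (m + 1))) with hA
  set B := ∏ m ∈ Finset.range n,
    ((1 : PowerSeries ℤ) - X ^ (M * m + aa)) * (1 - X ^ (M * m + bb)) with hB
  have hA' : A = ∏ m ∈ Finset.range n, ((1 : PowerSeries ℤ) - (X ^ M) ^ (m + 1)) := by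
    rw [hA]
    exact Finset.prod_congr rfl fun m _ => by rw [← pow_mul]
  have hcoeff : coeff N (B * A) = coeff (N + bb * n) (X ^ (bb * n) * (B * A)) :=
    (coeff_X_pow_mul (B * A) (bb * n) N).symm
  rw [hcoeff, ← mul_assoc, hkey, Finset.sum_mul, map_sum]
  have hterm : ∀ j ∈ Finset.range (2 * n + 1),
      coeff (N + bb * n) (keyC (X ^ M : PowerSeries ℤ) n j * (X ^ bb) ^ j * A)
        = if M * cc n j + bb * j = N + bb * n then ((-1 : ℤ)) ^ (j + n) else 0 := by
    intro j hj
    have hj2n : j ≤ 2 * n := by have := Finset.mem_range.mp hj; omega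
    have hX : ((X : PowerSeries ℤ) ^ M) ^ (cc n j) * (X ^ bb) ^ j
        = X ^ (M * cc n j + bb * j) := by
      rw [← pow_mul, ← pow_mul, ← pow_add]
    have hre : keyC (X ^ M : PowerSeries ℤ) n j * (X ^ bb) ^ j * A
        = C ((-1 : ℤ) ^ (j + n)) * (X ^ (M * cc n j + bb * j)
            * (gb (X ^ M) (2 * n) j * A)) := by
      unfold keyC
      rw [← hX, map_pow, map_neg, map_one]
      ring
    rw [hre, coeff_C_mul, coeff_X_pow_mul']
    have hbounds := key_bounds M bb N n j hbb (by omega) hM3 hn hj2n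
    by_cases hle : M * cc n j + bb * j ≤ N + bb * n
    · rw [if_pos hle]
      have hnear : Near1 (gb (X ^ M : PowerSeries ℤ) (2 * n) j * A)
          (M * (min j (2 * n - j) + 1)) := by
        rw [hA']
        exact near1_gb_mul_prod M n j hj2n
      rw [near1_coeff hnear (hbounds.2 hle)]
      by_cases he : M * cc n j + bb * j = N + bb * n
      · rw [if_pos he, if_pos (by omega)]
        ring
      · rw [if_neg he, if_neg (by omega)]
        ring
    · rw [if_neg hle, if_neg (by omega)]
      ring
  rw [Finset.sum_congr rfl hterm]
  by_cases hex : ∃ j, j ∈ Finset.range (2 * n + 1) ∧ M * cc n j + bb * j = N + bb * n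
  · obtain ⟨j₀, hj₀m, hj₀⟩ := hex
    have hci := (hbridge j₀).mp hj₀
    rw [Finset.sum_eq_single_of_mem j₀ hj₀m ?_, if_pos hj₀]
    · rw [theta_coeff_of_ex hbb h3 h2b hci]
      exact negpow_natAbs j₀ n
    · intro j hjm hne
      rw [if_neg]
      intro hc
      have := theta_uniq hbb h3 h2b ((hbridge j).mp hc) hci
      exact hne (by omega)
  · push_neg at hex
    rw [Finset.sum_eq_zero (fun j hjm => if_neg (hex j hjm))]
    rw [theta_coeff_of_not]
    intro k hk
    have hbd := theta_bound hbb h3 hk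
    have hjmem : (k + n).toNat ∈ Finset.range (2 * n + 1) := by
      rw [Finset.mem_range]; omega
    refine hex _ hjmem ((hbridge _).mpr ?_)
    have hcast : (((k + (n : ℤ)).toNat : ℤ)) - (n : ℤ) = k := by omega
    rw [hcast]
    exact hk

theorem theta_combine :
    theta 27 15 - X * theta 27 21 - X ^ 2 * theta 27 24 = theta 3 2 := by
  ext N
  rw [map_sub, map_sub]
  have c1 : coeff N ((X : PowerSeries ℤ) * theta 27 21)
      = if 1 ≤ N then coeff (N - 1) (theta 27 21) else 0 := by
    rw [show (X : PowerSeries ℤ) * theta 27 21 = X ^ 1 * theta 27 21 by rw [pow_one]]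
    exact coeff_X_pow_mul' _ 1 N
  have c2 : coeff N ((X : PowerSeries ℤ) ^ 2 * theta 27 24)
      = if 2 ≤ N then coeff (N - 2) (theta 27 24) else 0 := coeff_X_pow_mul' _ 2 N
  rw [c1, c2]
  by_cases hex : ∃ m : ℤ, (3 : ℤ) * m * (m - 1) + 2 * 2 * m = 2 * N
  · obtain ⟨m, hm⟩ := hex
    rw [theta_coeff_of_ex (by norm_num) (by norm_num) (by norm_num) hm]
    obtain ⟨k, hk⟩ | ⟨k, hk⟩ | ⟨k, hk⟩ :
        (∃ k : ℤ, m = 3 * k) ∨ (∃ k : ℤ, m = -(3 * k + 1)) ∨ (∃ k : ℤ, m = 3 * k + 1) := by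
      have hm3 : m % 3 = 0 ∨ m % 3 = 1 ∨ m % 3 = 2 := by omega
      rcases hm3 with h | h | h
      · exact Or.inl ⟨m / 3, by omega⟩
      · exact Or.inr (Or.inr ⟨m / 3, by omega⟩)
      · exact Or.inr (Or.inl ⟨-(m / 3) - 1, by omega⟩)
    · -- m = 3k : the theta 27 15 term survives
      subst hk
      have hA : (27 : ℤ) * k * (k - 1) + 2 * 15 * k = 2 * N := by linear_combination hm
      rw [theta_coeff_of_ex (by norm_num) (by norm_num) (by norm_num) hA]
      have hB : (if 1 ≤ N then coeff (N - 1) (theta 27 21) else 0) = 0 := by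
        split
        · apply theta_coeff_of_not
          intro k' hk'
          have hcast : ((N - 1 : ℕ) : ℤ) = (N : ℤ) - 1 := by omega
          rw [hcast] at hk'
          have hm' : (3 : ℤ) * (-(3 * k' + 1)) * ((-(3 * k' + 1)) - 1)
              + 2 * 2 * (-(3 * k' + 1)) = 2 * N := by linear_combination hk'
          have := theta_uniq (M := 3) (b := 2) (by norm_num) (by norm_num) (by norm_num) hm' hm
          omega
        · rfl
      have hC : (if 2 ≤ N then coeff (N - 2) (theta 27 24) else 0) = 0 := by
        split
        · apply theta_coeff_of_not
          intro k' hk'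
          have hcast : ((N - 2 : ℕ) : ℤ) = (N : ℤ) - 2 := by omega
          rw [hcast] at hk'
          have hm' : (3 : ℤ) * (3 * k' + 1) * ((3 * k' + 1) - 1)
              + 2 * 2 * (3 * k' + 1) = 2 * N := by linear_combination hk'
          have := theta_uniq (M := 3) (b := 2) (by norm_num) (by norm_num) (by norm_num) hm' hm
          omega
        · rfl
      rw [hB, hC]
      rw [negpow_congr (k.natAbs) ((3 * k).natAbs) (by omega)]
      ring
    · -- m = -(3k+1) : the theta 27 21 term survives
      subst hk
      have hN1 : 1 ≤ N := by
        rcases le_or_gt 0 k with h | h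
        · nlinarith
        · nlinarith
      rw [if_pos hN1]
      have hcast : ((N - 1 : ℕ) : ℤ) = (N : ℤ) - 1 := by omega
      have hA : (27 : ℤ) * k * (k - 1) + 2 * 21 * k = 2 * ((N - 1 : ℕ) : ℤ) := by
        rw [hcast]; linear_combination hm
      have hA' : (27 : ℤ) * k * (k - 1) + 2 * 21 * k = 2 * (N - 1 : ℕ) := hA
      rw [theta_coeff_of_ex (by norm_num) (by norm_num) (by norm_num) hA']
      have hB : coeff N (theta 27 15) = 0 := by
        apply theta_coeff_of_not
        intro k' hk'
        have hm' : (3 : ℤ) * (3 * k') * ((3 * k') - 1) + 2 * 2 * (3 * k') = 2 * N := by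
          linear_combination hk'
        have := theta_uniq (M := 3) (b := 2) (by norm_num) (by norm_num) (by norm_num) hm' hm
        omega
      have hC : (if 2 ≤ N then coeff (N - 2) (theta 27 24) else 0) = 0 := by
        split
        · apply theta_coeff_of_not
          intro k' hk'
          have hcast2 : ((N - 2 : ℕ) : ℤ) = (N : ℤ) - 2 := by omega
          rw [hcast2] at hk'
          have hm' : (3 : ℤ) * (3 * k' + 1) * ((3 * k' + 1) - 1)
              + 2 * 2 * (3 * k' + 1) = 2 * N := by linear_combination hk'
          have := theta_uniq (M := 3) (b := 2) (by norm_num) (by norm_num) (by norm_num) hm' hm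
          omega
        · rfl
      rw [hB, hC]
      rw [negpow_congr ((-(3 * k + 1)).natAbs) (k.natAbs + 1) (by omega), pow_succ]
      ring
    · -- m = 3k+1 : the theta 27 24 term survives
      subst hk
      have hN2 : 2 ≤ N := by
        rcases le_or_gt 0 k with h | h
        · nlinarith
        · nlinarith
      rw [if_pos hN2]
      have hcast : ((N - 2 : ℕ) : ℤ) = (N : ℤ) - 2 := by omega
      have hA : (27 : ℤ) * k * (k - 1) + 2 * 24 * k = 2 * (N - 2 : ℕ) := by
        rw [hcast]; linear_combination hm
      rw [theta_coeff_of_ex (by norm_num) (by norm_num) (by norm_num) hA]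
      have hB : coeff N (theta 27 15) = 0 := by
        apply theta_coeff_of_not
        intro k' hk'
        have hm' : (3 : ℤ) * (3 * k') * ((3 * k') - 1) + 2 * 2 * (3 * k') = 2 * N := by
          linear_combination hk'
        have := theta_uniq (M := 3) (b := 2) (by norm_num) (by norm_num) (by norm_num) hm' hm
        omega
      have hC : (if 1 ≤ N then coeff (N - 1) (theta 27 21) else 0) = 0 := by
        split
        · apply theta_coeff_of_not
          intro k' hk'
          have hcast2 : ((N - 1 : ℕ) : ℤ) = (N : ℤ) - 1 := by omega
          rw [hcast2] at hk'
          have hm' : (3 : ℤ) * (-(3 * k' + 1)) * ((-(3 * k' + 1)) - 1)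
              + 2 * 2 * (-(3 * k' + 1)) = 2 * N := by linear_combination hk'
          have := theta_uniq (M := 3) (b := 2) (by norm_num) (by norm_num) (by norm_num) hm' hm
          omega
        · rfl
      rw [hB, hC]
      rw [negpow_congr ((3 * k + 1).natAbs) (k.natAbs + 1) (by omega), pow_succ]
      ring
  · push_neg at hex
    rw [theta_coeff_of_not hex]
    have hB : coeff N (theta 27 15) = 0 := by
      apply theta_coeff_of_not
      intro k' hk'
      exact hex (3 * k') (by linear_combination hk')
    have hC : (if 1 ≤ N then coeff (N - 1) (theta 27 21) else 0) = 0 := by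
      split
      · apply theta_coeff_of_not
        intro k' hk'
        have hcast : ((N - 1 : ℕ) : ℤ) = (N : ℤ) - 1 := by omega
        rw [hcast] at hk'
        exact hex (-(3 * k' + 1)) (by linear_combination hk')
      · rfl
    have hD : (if 2 ≤ N then coeff (N - 2) (theta 27 24) else 0) = 0 := by
      split
      · apply theta_coeff_of_not
        intro k' hk'
        have hcast : ((N - 2 : ℕ) : ℤ) = (N : ℤ) - 2 := by omega
        rw [hcast] at hk'
        exact hex (3 * k' + 1) (by linear_combination hk')
      · rfl
    rw [hB, hC, hD]
    ring


end Aux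

/-- The q-series identity
`∏_{n ≢ 0,±12 (27)} 1/(1-qⁿ) - q ∏_{n ≢ 0,±6 (27)} 1/(1-qⁿ)
  - q² ∏_{n ≢ 0,±3 (27)} 1/(1-qⁿ) = 1` in `ℤ⟦q⟧`. -/
theorem andrews_gordon_q_series_identity :
    AG 12 - X * AG 6 - X ^ 2 * AG 3 = 1 := by
  have hEfac : ∀ i, Near1 ((1 : PowerSeries ℤ) - X ^ (i + 1)) (i + 1) :=
    fun i => near1_one_sub_pow (i + 1)
  set E := seriesProd (fun i => (1 : PowerSeries ℤ) - X ^ (i + 1)) with hEdef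
  have hAGfac : ∀ a i, Near1 (if (i + 1) % 27 = 0 ∨ (i + 1) % 27 = a % 27
      ∨ (i + 1 + a) % 27 = 0 then (1 : PowerSeries ℤ)
      else PowerSeries.invOfUnit (1 - X ^ (i + 1)) 1) (i + 1) := by
    intro a i
    split
    · exact near1_one _
    · exact near1_invOfUnit i
  have hmulAG : ∀ a : ℕ, E * AG a = seriesProd (fun i =>
      if (i + 1) % 27 = 0 ∨ (i + 1) % 27 = a % 27 ∨ (i + 1 + a) % 27 = 0
        then (1 : PowerSeries ℤ) - X ^ (i + 1) else 1) := by
    intro a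
    rw [hEdef, AG, seriesProd_mul _ _ hEfac (hAGfac a)]
    apply seriesProd_congr
    intro i
    by_cases hc : (i + 1) % 27 = 0 ∨ (i + 1) % 27 = a % 27 ∨ (i + 1 + a) % 27 = 0
    · rw [if_pos hc, if_pos hc, mul_one]
    · rw [if_neg hc, if_neg hc]
      exact one_sub_X_pow_mul_inv i
  have h12 : E * AG 12 = theta 27 15 := by
    rw [hmulAG 12, ← W_eq_theta 27 12 15 (by norm_num) (by norm_num) (by norm_num)
      (by norm_num) (by norm_num)]
    apply seriesProd_congr
    intro i
    exact if_congr (by omega) rfl rfl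
  have h6 : E * AG 6 = theta 27 21 := by
    rw [hmulAG 6, ← W_eq_theta 27 6 21 (by norm_num) (by norm_num) (by norm_num)
      (by norm_num) (by norm_num)]
    apply seriesProd_congr
    intro i
    exact if_congr (by omega) rfl rfl
  have h3 : E * AG 3 = theta 27 24 := by
    rw [hmulAG 3, ← W_eq_theta 27 3 24 (by norm_num) (by norm_num) (by norm_num)
      (by norm_num) (by norm_num)]
    apply seriesProd_congr
    intro i
    exact if_congr (by omega) rfl rfl
  have hEtheta : E = theta 3 2 := by
    rw [← W_eq_theta 3 1 2 (by norm_num) (by norm_num) (by norm_num)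
      (by norm_num) (by norm_num), hEdef]
    apply seriesProd_congr
    intro i
    rw [if_pos (by omega)]
  have hmain : E * (AG 12 - X * AG 6 - X ^ 2 * AG 3) = E * 1 := by
    rw [mul_one]
    calc E * (AG 12 - X * AG 6 - X ^ 2 * AG 3)
        = E * AG 12 - X * (E * AG 6) - X ^ 2 * (E * AG 3) := by ring
      _ = theta 27 15 - X * theta 27 21 - X ^ 2 * theta 27 24 := by rw [h12, h6, h3]
      _ = theta 3 2 := theta_combine
      _ = E := hEtheta.symm
  have hEne : E ≠ 0 := by
    intro h0
    have hc0 : coeff 0 E = 0 := by rw [h0]; simp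
    rw [hEdef] at hc0
    rw [seriesProd_coeff_stable _ hEfac 0 1 le_rfl] at hc0
    simp [coeff_zero_eq_constantCoeff, map_sub, map_pow, constantCoeff_X] at hc0
  exact mul_left_cancel₀ hEne hmain
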